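/- Let n, d be integers with d ≥ 2 and n ≥ 2d − 1. Let L be the finite poset, ordered by set inclusion, whose elements are: the empty subset of ℤ/nℤ, the full set ℤ/nℤ, and all cyclic intervals of ℤ/nℤ of length s for 1 ≤ s ≤ d. Then the Möbius function μ of L satisfies μ(∅, ℤ/nℤ) = −1, where ∅ is the bottom element and ℤ/nℤ is the top element of L. -/

import Mathlib

open Finset

/-- The cyclic interval `{i, i+1, …, i+s-1}` of length `s` in `ZMod n`. -/
def cycInt (n : ℕ) [NeZero n] (i : ZMod n) (s : ℕ) : Finset (ZMod n) :=
  (Finset.range s).image (fun t : ℕ => i + (t : ZMod n))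

/-- Membership predicate for the poset `L`: the empty set, the full set `ZMod n`,
and all cyclic intervals of length `s` with `1 ≤ s ≤ d`. -/
def IsLElem (n d : ℕ) [NeZero n] (S : Finset (ZMod n)) : Prop :=
  S = ∅ ∨ S = Finset.univ ∨ ∃ (i : ZMod n) (s : ℕ), 1 ≤ s ∧ s ≤ d ∧ S = cycInt n i s

/-- The poset `L`, ordered by inclusion. -/
def CycPoset (n d : ℕ) [NeZero n] : Type := {S : Finset (ZMod n) // IsLElem n d S}

instance (n d : ℕ) [NeZero n] : PartialOrder (CycPoset n d) :=
  Subtype.partialOrder _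

instance (n d : ℕ) [NeZero n] : Finite (CycPoset n d) :=
  Subtype.finite

noncomputable instance (n d : ℕ) [NeZero n] : Fintype (CycPoset n d) :=
  Fintype.ofFinite _

open Classical in
/-- The Möbius function of the finite poset `L`: `μ(x, x) = 1`,
`μ(x, y) = -∑_{x ≤ z < y} μ(x, z)` for `x < y` (and `0` if `x ≤ y` fails). -/
noncomputable def moebiusL (n d : ℕ) [NeZero n] (x y : CycPoset n d) : ℤ :=
  if y = x then 1
  else if x ≤ y then
    - ∑ z ∈ (Finset.univ.filter (fun z : CycPoset n d => x ≤ z ∧ z < y)).attach,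
        moebiusL n d x z.1
  else 0
termination_by y.1.card
decreasing_by
  rename_i z
  have hz := z.2
  simp only [Finset.mem_filter, Finset.mem_univ, true_and] at hz
  exact Finset.card_lt_card (Subtype.coe_lt_coe.mpr hz.2)

/-! ### Auxiliary lemmas -/

attribute [reducible] IsLElem CycPoset

lemma natCast_zmod_inj {n a b : ℕ} [NeZero n] (ha : a < n) (hb : b < n)
    (h : (a : ZMod n) = b) : a = b := by
  have := congrArg ZMod.val h
  rwa [ZMod.val_natCast_of_lt ha, ZMod.val_natCast_of_lt hb] at this

lemma mem_cycInt {n : ℕ} [NeZero n] {i x : ZMod n} {s : ℕ} :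
    x ∈ cycInt n i s ↔ ∃ t, t < s ∧ x = i + (t : ZMod n) := by
  simp [cycInt, eq_comm]

lemma self_mem_cycInt {n : ℕ} [NeZero n] (i : ZMod n) {s : ℕ} (hs : 1 ≤ s) :
    i ∈ cycInt n i s :=
  mem_cycInt.2 ⟨0, hs, by simp⟩

lemma cycInt_card {n : ℕ} [NeZero n] {i : ZMod n} {s : ℕ} (hs : s ≤ n) :
    (cycInt n i s).card = s := by
  rw [cycInt, Finset.card_image_of_injOn, Finset.card_range]
  intro a ha b hb hab
  simp only [Finset.coe_range, Set.mem_Iio] at ha hb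
  exact natCast_zmod_inj (lt_of_lt_of_le ha hs) (lt_of_lt_of_le hb hs) (add_left_cancel hab)

lemma cycInt_ne_empty {n : ℕ} [NeZero n] {i : ZMod n} {s : ℕ} (hs : 1 ≤ s) :
    cycInt n i s ≠ ∅ :=
  Finset.ne_empty_of_mem (self_mem_cycInt i hs)

lemma cycInt_subset_iff {n d : ℕ} [NeZero n] (hd : 2 ≤ d) (hn : 2 * d - 1 ≤ n)
    {i j : ZMod n} {s t : ℕ} (h1 : 1 ≤ t) (htd : t ≤ d) (hsd : s ≤ d) :
    cycInt n j t ⊆ cycInt n i s ↔ ∃ a, a + t ≤ s ∧ j = i + (a : ZMod n) := by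
  constructor
  · intro h
    obtain ⟨c, hc, hjc⟩ := mem_cycInt.1 (h (self_mem_cycInt j h1))
    have hmem : j + ((t - 1 : ℕ) : ZMod n) ∈ cycInt n j t :=
      mem_cycInt.2 ⟨t - 1, by omega, rfl⟩
    obtain ⟨b, hb, hbe⟩ := mem_cycInt.1 (h hmem)
    rw [hjc, add_assoc] at hbe
    have hcast : ((c + (t - 1) : ℕ) : ZMod n) = (b : ZMod n) := by
      push_cast
      exact add_left_cancel hbe
    have := natCast_zmod_inj (by omega) (by omega) hcast
    exact ⟨c, by omega, hjc⟩
  · rintro ⟨a, hat, rfl⟩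
    intro x hx
    obtain ⟨u, hu, rfl⟩ := mem_cycInt.1 hx
    refine mem_cycInt.2 ⟨a + u, by omega, ?_⟩
    push_cast
    ring

lemma cycInt_inj {n d : ℕ} [NeZero n] (hd : 2 ≤ d) (hn : 2 * d - 1 ≤ n)
    {i j : ZMod n} {s t : ℕ} (h1 : 1 ≤ t) (htd : t ≤ d) (hs1 : 1 ≤ s) (hsd : s ≤ d)
    (h : cycInt n j t = cycInt n i s) : t = s ∧ j = i := by
  have hdn : d < n := by omega
  have hts : t = s := by
    have := congrArg Finset.card h
    rwa [cycInt_card (by omega), cycInt_card (by omega)] at this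
  subst hts
  obtain ⟨a, hat, hja⟩ := (cycInt_subset_iff hd hn h1 htd hsd).1 h.le
  have ha0 : a = 0 := by omega
  subst ha0
  simp only [Nat.cast_zero, add_zero] at hja
  exact ⟨rfl, hja⟩

lemma cycPoset_le_iff {n d : ℕ} [NeZero n] {x y : CycPoset n d} : x ≤ y ↔ x.1 ⊆ y.1 :=
  Iff.rfl

lemma cycPoset_lt_iff {n d : ℕ} [NeZero n] {x y : CycPoset n d} : x < y ↔ x.1 ⊂ y.1 :=
  Iff.rfl

/-- The value of the Möbius function `μ(∅, I)` for an interval of length `t`. -/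
def cval : ℕ → ℤ
  | 0 => 1
  | 1 => -1
  | 2 => 1
  | _ + 3 => 0

lemma cval_eq_zero {t : ℕ} (ht : 3 ≤ t) : cval t = 0 := by
  obtain ⟨u, rfl⟩ : ∃ u, t = u + 3 := ⟨t - 3, by omega⟩
  rfl

/-- The element of the poset encoded by a pair `(t, a)`:
`∅` if `t = 0` or `t > d`, otherwise the interval of length `t` starting at `base + a`. -/
noncomputable def elemOf (n d : ℕ) [NeZero n] (base : ZMod n) (t a : ℕ) : CycPoset n d :=
  if h : 1 ≤ t ∧ t ≤ d then
    ⟨cycInt n (base + (a : ZMod n)) t, Or.inr (Or.inr ⟨_, t, h.1, h.2, rfl⟩)⟩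
  else ⟨∅, Or.inl rfl⟩

lemma neg_sum_eq_of_eq {α : Type*} (f : α → ℤ) (F B : Finset α) (hFB : F = B) (v : ℤ)
    (h : -∑ x ∈ B, f x = v) : -∑ x ∈ F, f x = v := hFB ▸ h

lemma arith1 (s : ℕ) (hs : 1 ≤ s) :
    ∑ t ∈ Finset.range s, ((if t = 0 then 1 else s + 1 - t : ℕ) : ℤ) * cval t = -cval s := by
  match s, hs with
  | 1, _ => simp [cval]
  | 2, _ => simp [Finset.sum_range_succ, cval]
  | (m + 3), _ =>
    rw [← Finset.sum_subset (Finset.range_subset_range.2 (by omega : 3 ≤ m + 3))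
      (fun t _ ht => by
        rw [cval_eq_zero (by simpa using ht), mul_zero])]
    rw [cval_eq_zero (by omega)]
    simp [Finset.sum_range_succ, cval]
    omega

lemma arith2 (d n : ℕ) (hd : 2 ≤ d) :
    ∑ t ∈ Finset.range (d + 1), ((if t = 0 then 1 else n : ℕ) : ℤ) * cval t = 1 := by
  rw [← Finset.sum_subset (Finset.range_subset_range.2 (by omega : 3 ≤ d + 1))
    (fun t _ ht => by
      rw [cval_eq_zero (by simpa using ht), mul_zero])]
  simp [Finset.sum_range_succ, cval]

set_option maxHeartbeats 1000000 in
open Classical in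
lemma mu_cycInt (n d : ℕ) [NeZero n] (hd : 2 ≤ d) (hn : 2 * d - 1 ≤ n) :
    ∀ s, 1 ≤ s → s ≤ d → ∀ (i : ZMod n) (hmem : IsLElem n d (cycInt n i s)),
    moebiusL n d ⟨∅, Or.inl rfl⟩ ⟨cycInt n i s, hmem⟩ = cval s := by
  intro s
  induction s using Nat.strong_induction_on with
  | _ s IH =>
  intro hs1 hsd i hmem
  have hdn : d < n := by omega
  rw [moebiusL.eq_1 n d ⟨∅, Or.inl rfl⟩ ⟨cycInt n i s, hmem⟩]
  rw [if_neg (by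
    intro h
    exact cycInt_ne_empty hs1 (congrArg Subtype.val h))]
  rw [if_pos (by exact cycPoset_le_iff.2 (Finset.empty_subset _))]
  rw [Finset.sum_attach _ (fun z => moebiusL n d ⟨∅, Or.inl rfl⟩ z)]
  apply neg_sum_eq_of_eq (B :=
      Finset.image (fun p : Σ _ : ℕ, ℕ => elemOf n d i p.1 p.2)
        ((Finset.range s).sigma (fun t => Finset.range (if t = 0 then 1 else s + 1 - t))))
  · ext z
    simp only [Finset.mem_filter, Finset.mem_univ, true_and, Finset.mem_image,
      Finset.mem_sigma, Finset.mem_range]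
    constructor
    · rintro ⟨-, hlt⟩
      have hss : z.1 ⊂ cycInt n i s := cycPoset_lt_iff.1 hlt
      rcases z.2 with hz | hz | ⟨j, t, ht1, htd, hz⟩
      · refine ⟨⟨0, 0⟩, ⟨hs1, by simp⟩, ?_⟩
        simp only [elemOf, dif_neg (by omega : ¬(1 ≤ 0 ∧ 0 ≤ d))]
        exact Subtype.ext hz.symm
      · exfalso
        have := Finset.card_le_card hss.subset
        rw [hz] at this
        simp only [Finset.card_univ, ZMod.card] at this
        rw [cycInt_card (by omega)] at this
        omega
      · obtain ⟨a, hat, hja⟩ := (cycInt_subset_iff hd hn ht1 htd hsd).1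
          (hz ▸ hss.subset)
        have hts : t ≠ s := by
          intro h
          subst h
          have ha0 : a = 0 := by omega
          subst ha0
          simp only [Nat.cast_zero, add_zero] at hja
          exact hss.ne (by rw [hz, hja])
        refine ⟨⟨t, a⟩, ⟨by exact (by omega : t < s),
          by exact (show a < if t = 0 then 1 else s + 1 - t by
            rw [if_neg (by omega : ¬ t = 0)]; omega)⟩, ?_⟩
        simp only [elemOf, dif_pos (And.intro ht1 htd)]
        exact Subtype.ext (by rw [hz, hja])
    · rintro ⟨⟨t, a⟩, ⟨hts, hta⟩, rfl⟩
      have hts : t < s := hts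
      have hta : a < if t = 0 then 1 else s + 1 - t := hta
      refine ⟨cycPoset_le_iff.2 (Finset.empty_subset _), cycPoset_lt_iff.2 ?_⟩
      by_cases ht0 : t = 0
      · subst ht0
        simp only [elemOf, dif_neg (by omega : ¬(1 ≤ 0 ∧ 0 ≤ d))]
        exact Finset.ssubset_iff_of_subset (Finset.empty_subset _) |>.2
          ⟨i, self_mem_cycInt i hs1, by simp⟩
      · have ht1 : 1 ≤ t := by omega
        have htd : t ≤ d := by omega
        rw [if_neg ht0] at hta
        simp only [elemOf, dif_pos (And.intro ht1 htd)]
        refine Finset.ssubset_iff_subset_ne.2 ⟨?_, ?_⟩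
        · exact (cycInt_subset_iff hd hn ht1 htd hsd).2 ⟨a, by omega, rfl⟩
        · intro h
          have := congrArg Finset.card h
          rw [cycInt_card (by omega), cycInt_card (by omega)] at this
          omega
  rw [Finset.sum_image (by
    rintro ⟨t, a⟩ hp ⟨t', a'⟩ hq h
    simp only [Finset.mem_coe, Finset.mem_sigma, Finset.mem_range] at hp hq
    by_cases ht0 : t = 0 <;> by_cases ht0' : t' = 0
    · subst ht0; subst ht0'
      simp at hp hq
      simp [hp.2, hq.2]
    · exfalso
      subst ht0
      simp only [elemOf, dif_neg (by omega : ¬(1 ≤ 0 ∧ 0 ≤ d)),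
        dif_pos (show 1 ≤ t' ∧ t' ≤ d by omega)] at h
      exact cycInt_ne_empty (by omega) (congrArg Subtype.val h).symm
    · exfalso
      subst ht0'
      simp only [elemOf, dif_neg (by omega : ¬(1 ≤ 0 ∧ 0 ≤ d)),
        dif_pos (show 1 ≤ t ∧ t ≤ d by omega)] at h
      exact cycInt_ne_empty (by omega) (congrArg Subtype.val h)
    · simp only [elemOf, dif_pos (show 1 ≤ t ∧ t ≤ d by omega),
        dif_pos (show 1 ≤ t' ∧ t' ≤ d by omega)] at h
      have heq := congrArg Subtype.val h
      obtain ⟨hts', hjj⟩ := cycInt_inj hd hn (by omega) (by omega) (by omega) (by omega) heq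
      subst hts'
      have : (a : ZMod n) = (a' : ZMod n) := add_left_cancel hjj
      rw [if_neg ht0] at hp hq
      have := natCast_zmod_inj (by omega) (by omega) this
      simp [this])]
  rw [← Finset.sum_sigma' (Finset.range s)
    (fun t => Finset.range (if t = 0 then 1 else s + 1 - t))
    (fun t a => moebiusL n d ⟨∅, Or.inl rfl⟩ (elemOf n d i t a))]
  have hterm : ∀ t ∈ Finset.range s, ∀ a ∈ Finset.range (if t = 0 then 1 else s + 1 - t),
      moebiusL n d ⟨∅, Or.inl rfl⟩ (elemOf n d i t a) = cval t := by
    intro t ht a _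
    simp only [Finset.mem_range] at ht
    by_cases ht0 : t = 0
    · subst ht0
      simp only [elemOf, dif_neg (by omega : ¬(1 ≤ 0 ∧ 0 ≤ d))]
      rw [moebiusL, if_pos rfl]
      rfl
    · have ht1 : 1 ≤ t := by omega
      have htd : t ≤ d := by omega
      simp only [elemOf, dif_pos (And.intro ht1 htd)]
      exact IH t ht ht1 htd _ _
  calc - ∑ t ∈ Finset.range s, ∑ a ∈ Finset.range (if t = 0 then 1 else s + 1 - t),
        moebiusL n d ⟨∅, Or.inl rfl⟩ (elemOf n d i t a)
      = - ∑ t ∈ Finset.range s, ∑ _a ∈ Finset.range (if t = 0 then 1 else s + 1 - t),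
        cval t := by
        congr 1
        exact Finset.sum_congr rfl (fun t ht => Finset.sum_congr rfl (hterm t ht))
    _ = cval s := by
        simp only [Finset.sum_const, Finset.card_range, nsmul_eq_mul]
        rw [arith1 s hs1, neg_neg]

/-- For `d ≥ 2` and `n ≥ 2d - 1`, the Möbius function of the poset `L` (consisting of
`∅`, `ZMod n`, and all cyclic intervals of length `1 ≤ s ≤ d`, ordered by inclusion)
satisfies `μ(∅, ZMod n) = -1`. -/
theorem stmt14 (n d : ℕ) [NeZero n] (hd : 2 ≤ d) (hn : 2 * d - 1 ≤ n) :
    moebiusL n d ⟨∅, Or.inl rfl⟩ ⟨Finset.univ, Or.inr (Or.inl rfl)⟩ = -1 := by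
  classical
  have hdn : d < n := by omega
  rw [moebiusL.eq_1 n d ⟨∅, Or.inl rfl⟩ ⟨Finset.univ, Or.inr (Or.inl rfl)⟩]
  rw [if_neg (by
    intro h
    exact Finset.univ_nonempty.ne_empty (congrArg Subtype.val h))]
  rw [if_pos (by exact cycPoset_le_iff.2 (Finset.empty_subset _))]
  rw [Finset.sum_attach _ (fun z => moebiusL n d ⟨∅, Or.inl rfl⟩ z)]
  apply neg_sum_eq_of_eq (B :=
      Finset.image (fun p : Σ _ : ℕ, ℕ => elemOf n d 0 p.1 p.2)
        ((Finset.range (d + 1)).sigma (fun t => Finset.range (if t = 0 then 1 else n))))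
  · ext z
    simp only [Finset.mem_filter, Finset.mem_univ, true_and, Finset.mem_image,
      Finset.mem_sigma, Finset.mem_range]
    constructor
    · rintro ⟨-, hlt⟩
      have hss : z.1 ⊂ Finset.univ := cycPoset_lt_iff.1 hlt
      rcases z.2 with hz | hz | ⟨j, t, ht1, htd, hz⟩
      · refine ⟨⟨0, 0⟩, ⟨by exact (by omega : 0 < d + 1), by simp⟩, ?_⟩
        simp only [elemOf, dif_neg (by omega : ¬(1 ≤ 0 ∧ 0 ≤ d))]
        exact Subtype.ext hz.symm
      · exact absurd hz hss.ne
      · refine ⟨⟨t, j.val⟩, ⟨by exact (by omega : t < d + 1),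
          by exact (show j.val < if t = 0 then 1 else n by
            rw [if_neg (by omega : ¬ t = 0)]; exact ZMod.val_lt j)⟩, ?_⟩
        simp only [elemOf, dif_pos (And.intro ht1 htd)]
        refine Subtype.ext ?_
        show cycInt n (0 + (j.val : ZMod n)) t = z.1
        rw [hz, zero_add, ZMod.natCast_rightInverse j]
    · rintro ⟨⟨t, a⟩, ⟨hts, hta⟩, rfl⟩
      have hts : t < d + 1 := hts
      have hta : a < if t = 0 then 1 else n := hta
      refine ⟨cycPoset_le_iff.2 (Finset.empty_subset _), cycPoset_lt_iff.2 ?_⟩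
      by_cases ht0 : t = 0
      · subst ht0
        simp only [elemOf, dif_neg (by omega : ¬(1 ≤ 0 ∧ 0 ≤ d))]
        exact Finset.empty_ssubset.2 Finset.univ_nonempty
      · have ht1 : 1 ≤ t := by omega
        have htd : t ≤ d := by omega
        simp only [elemOf, dif_pos (And.intro ht1 htd)]
        refine Finset.ssubset_univ_iff.2 ?_
        intro h
        have := congrArg Finset.card h
        rw [cycInt_card (by omega)] at this
        simp only [Finset.card_univ, ZMod.card] at this
        omega
  · rw [Finset.sum_image (by
      rintro ⟨t, a⟩ hp ⟨t', a'⟩ hq h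
      simp only [Finset.mem_coe, Finset.mem_sigma, Finset.mem_range] at hp hq
      by_cases ht0 : t = 0 <;> by_cases ht0' : t' = 0
      · subst ht0; subst ht0'
        simp at hp hq
        simp [hp, hq]
      · exfalso
        subst ht0
        simp only [elemOf, dif_neg (by omega : ¬(1 ≤ 0 ∧ 0 ≤ d)),
          dif_pos (show 1 ≤ t' ∧ t' ≤ d by omega)] at h
        exact cycInt_ne_empty (by omega) (congrArg Subtype.val h).symm
      · exfalso
        subst ht0'
        simp only [elemOf, dif_neg (by omega : ¬(1 ≤ 0 ∧ 0 ≤ d)),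
          dif_pos (show 1 ≤ t ∧ t ≤ d by omega)] at h
        exact cycInt_ne_empty (by omega) (congrArg Subtype.val h)
      · simp only [elemOf, dif_pos (show 1 ≤ t ∧ t ≤ d by omega),
          dif_pos (show 1 ≤ t' ∧ t' ≤ d by omega)] at h
        have heq := congrArg Subtype.val h
        obtain ⟨hts', hjj⟩ := cycInt_inj hd hn (by omega) (by omega) (by omega) (by omega) heq
        subst hts'
        have : (a : ZMod n) = (a' : ZMod n) := add_left_cancel hjj
        rw [if_neg ht0] at hp hq
        have := natCast_zmod_inj (by omega) (by omega) this
        simp [this])]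
    rw [← Finset.sum_sigma' (Finset.range (d + 1))
      (fun t => Finset.range (if t = 0 then 1 else n))
      (fun t a => moebiusL n d ⟨∅, Or.inl rfl⟩ (elemOf n d 0 t a))]
    have hterm : ∀ t ∈ Finset.range (d + 1), ∀ a ∈ Finset.range (if t = 0 then 1 else n),
        moebiusL n d ⟨∅, Or.inl rfl⟩ (elemOf n d 0 t a) = cval t := by
      intro t ht a _
      simp only [Finset.mem_range] at ht
      by_cases ht0 : t = 0
      · subst ht0
        simp only [elemOf, dif_neg (by omega : ¬(1 ≤ 0 ∧ 0 ≤ d))]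
        rw [moebiusL, if_pos rfl]
        rfl
      · have ht1 : 1 ≤ t := by omega
        have htd : t ≤ d := by omega
        simp only [elemOf, dif_pos (And.intro ht1 htd)]
        exact mu_cycInt n d hd hn t ht1 htd _ _
    calc - ∑ t ∈ Finset.range (d + 1), ∑ a ∈ Finset.range (if t = 0 then 1 else n),
          moebiusL n d ⟨∅, Or.inl rfl⟩ (elemOf n d 0 t a)
        = - ∑ t ∈ Finset.range (d + 1), ∑ _a ∈ Finset.range (if t = 0 then 1 else n),
          cval t := by
          congr 1
          exact Finset.sum_congr rfl (fun t ht => Finset.sum_congr rfl (hterm t ht))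
      _ = -1 := by
          simp only [Finset.sum_const, Finset.card_range, nsmul_eq_mul]
          rw [arith2 d n hd]
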